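/- Let n = 1, α < 0, σ > 0, p ≥ 0, and let f : ℝ → ℝ be continuous. Define P(t,x,u) = f(u/α)/(|α|σ√(2πt)·|u|^p) · exp(-(u(1/α + t) - x)²/(2σ²t|u|^{2p})) for t > 0 and u ≠ 0. Then for each fixed u ≠ 0, P satisfies the PDE ∂ₜP = -u ∂ₓP + (σ²|u|^{2p}/2) ∂ₓₓP on t > 0, x ∈ ℝ. -/

import Mathlib

open Real

private lemma gauss_pde (u c D : ℝ) (hD : 0 < D) (t x : ℝ) (ht : 0 < t) :
    deriv (fun s : ℝ => (Real.sqrt (2*π*s))⁻¹ * Real.exp (-(u*(c+s)-x)^2 / (2*D*s))) t =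
      -u * deriv (fun y : ℝ => (Real.sqrt (2*π*t))⁻¹ * Real.exp (-(u*(c+t)-y)^2 / (2*D*t))) x +
      D/2 * deriv (fun y : ℝ =>
        deriv (fun z : ℝ => (Real.sqrt (2*π*t))⁻¹ * Real.exp (-(u*(c+t)-z)^2 / (2*D*t))) y) x := by
  have h2πt : (0:ℝ) < 2*π*t := by positivity
  set r := Real.sqrt (2*π*t) with hr
  have hrpos : 0 < r := Real.sqrt_pos.mpr h2πt
  have hr2 : r^2 = 2*π*t := Real.sq_sqrt h2πt.le
  -- spatial derivative
  have hx : ∀ y : ℝ, HasDerivAt (fun z : ℝ => r⁻¹ * Real.exp (-(u*(c+t)-z)^2 / (2*D*t)))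
      (r⁻¹ * Real.exp (-(u*(c+t)-y)^2 / (2*D*t)) * ((u*(c+t)-y)/(D*t))) y := by
    intro y
    have hlin : HasDerivAt (fun z : ℝ => u*(c+t)-z) (-1) y := (hasDerivAt_id y).const_sub _
    have hsq : HasDerivAt (fun z : ℝ => (u*(c+t)-z)^2) (2*(u*(c+t)-y)*(-1)) y := by
      exact (hlin.pow 2).congr_deriv (by norm_num)
    have hquot : HasDerivAt (fun z : ℝ => -(u*(c+t)-z)^2/(2*D*t)) ((2*(u*(c+t)-y))/(2*D*t)) y := by
      have := (hsq.neg).div_const (2*D*t)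
      refine this.congr_deriv ?_; ring
    have := (hquot.exp).const_mul r⁻¹
    refine this.congr_deriv ?_
    field_simp
  -- second spatial derivative
  have hx2 : HasDerivAt (fun y : ℝ =>
        r⁻¹ * Real.exp (-(u*(c+t)-y)^2/(2*D*t)) * ((u*(c+t)-y)/(D*t)))
      ((r⁻¹ * Real.exp (-(u*(c+t)-x)^2/(2*D*t)) * ((u*(c+t)-x)/(D*t))) * ((u*(c+t)-x)/(D*t))
        + (r⁻¹ * Real.exp (-(u*(c+t)-x)^2/(2*D*t))) * (-1/(D*t))) x := by
    have hlin : HasDerivAt (fun y : ℝ => (u*(c+t)-y)/(D*t)) (-1/(D*t)) x :=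
      ((hasDerivAt_id x).const_sub _).div_const _
    exact (hx x).mul hlin
  -- time derivative
  have hsqrt : HasDerivAt (fun s : ℝ => Real.sqrt (2*π*s)) (π/r) t := by
    have hin : HasDerivAt (fun s : ℝ => 2*π*s) (2*π) t := by
      simpa using (hasDerivAt_id t).const_mul (2*π)
    have := (Real.hasDerivAt_sqrt h2πt.ne').comp t hin
    refine this.congr_deriv ?_
    rw [← hr]
    field_simp
  have hinv : HasDerivAt (fun s : ℝ => (Real.sqrt (2*π*s))⁻¹) (-(π/r)/r^2) t := by
    have := hsqrt.inv (by rw [← hr]; exact hrpos.ne')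
    exact this.congr_deriv (by rw [← hr])
  have hnum : HasDerivAt (fun s : ℝ => -(u*(c+s)-x)^2) (-(2*(u*(c+t)-x)*u)) t := by
    have h1 : HasDerivAt (fun s : ℝ => u*(c+s)-x) u t := by
      have h0 : HasDerivAt (fun s : ℝ => c+s) 1 t := (hasDerivAt_id t).const_add c
      simpa using (h0.const_mul u).sub_const x
    have := (h1.pow 2).neg
    refine this.congr_deriv ?_
    push_cast
    ring
  have hden : HasDerivAt (fun s : ℝ => 2*D*s) (2*D) t := by
    simpa using (hasDerivAt_id t).const_mul (2*D)
  have hq : HasDerivAt (fun s : ℝ => -(u*(c+s)-x)^2/(2*D*s))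
      (((-(2*(u*(c+t)-x)*u)) * (2*D*t) - (-(u*(c+t)-x)^2) * (2*D)) / (2*D*t)^2) t :=
    hnum.div hden (by positivity)
  have hT : HasDerivAt (fun s : ℝ => (Real.sqrt (2*π*s))⁻¹ * Real.exp (-(u*(c+s)-x)^2/(2*D*s)))
      ((-(π/r)/r^2) * Real.exp (-(u*(c+t)-x)^2/(2*D*t))
        + (Real.sqrt (2*π*t))⁻¹ * (Real.exp (-(u*(c+t)-x)^2/(2*D*t)) *
          (((-(2*(u*(c+t)-x)*u)) * (2*D*t) - (-(u*(c+t)-x)^2) * (2*D)) / (2*D*t)^2))) t :=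
    hinv.mul hq.exp
  have hrew : (fun y : ℝ => deriv (fun z : ℝ => r⁻¹ * Real.exp (-(u*(c+t)-z)^2/(2*D*t))) y)
      = fun y : ℝ => r⁻¹ * Real.exp (-(u*(c+t)-y)^2/(2*D*t)) * ((u*(c+t)-y)/(D*t)) :=
    funext fun y => (hx y).deriv
  rw [hT.deriv, (hx x).deriv, hrew, hx2.deriv, ← hr]
  have hπ : π = r^2/(2*t) := by rw [hr2]; field_simp
  rw [hπ]
  have hE := Real.exp_pos (-(u*(c+t)-x)^2/(2*D*t))
  field_simp
  ring

/-- In dimension `n = 1` with `β = 0`, the kernel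
`P(t,x,u) = f(u/α)/(|α|σ√(2πt)·|u|^p) · exp(-(u(1/α+t)-x)²/(2σ²t|u|^{2p}))`
satisfies the Fokker–Planck equation `∂ₜP = -u ∂ₓP + (σ²|u|^{2p}/2) ∂ₓₓP`
for `t > 0`, `x ∈ ℝ`, and each fixed `u ≠ 0`. -/
theorem fokker_planck_explicit_solution (α σ p : ℝ) (hα : α < 0) (hσ : 0 < σ)
    (hp : 0 ≤ p) (f : ℝ → ℝ) (hf : Continuous f)
    (P : ℝ → ℝ → ℝ → ℝ)
    (hP : ∀ t x u : ℝ, P t x u =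
      f (u / α) / (|α| * σ * Real.sqrt (2 * π * t) * |u| ^ p) *
        Real.exp (-(u * (1 / α + t) - x) ^ 2 / (2 * σ ^ 2 * t * |u| ^ (2 * p)))) :
    ∀ t x u : ℝ, 0 < t → u ≠ 0 →
      deriv (fun s => P s x u) t =
        -u * deriv (fun y => P t y u) x +
          σ ^ 2 * |u| ^ (2 * p) / 2 * deriv (fun y => deriv (fun z => P t z u) y) x := by
  intro t x u ht hu
  have hu' : (0:ℝ) < |u| := abs_pos.mpr hu
  set D : ℝ := σ^2 * |u|^(2*p) with hDdef
  have hDpos : 0 < D := by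
    have := Real.rpow_pos_of_pos hu' (2*p)
    positivity
  set K : ℝ := f (u/α) / (|α| * σ * |u|^p) with hK
  have hPeq : ∀ s y : ℝ, P s y u =
      K * ((Real.sqrt (2*π*s))⁻¹ * Real.exp (-(u*((1/α)+s)-y)^2/(2*D*s))) := by
    intro s y
    rw [hP, hK]
    rw [show (2 * σ^2 * s * |u|^(2*p)) = 2*D*s by rw [hDdef]; ring]
    simp only [div_eq_mul_inv, mul_inv]
    ring
  have h1 : (fun s => P s x u) =
      fun s => K * ((Real.sqrt (2*π*s))⁻¹ * Real.exp (-(u*((1/α)+s)-x)^2/(2*D*s))) :=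
    funext fun s => hPeq s x
  have h2 : (fun z => P t z u) =
      fun z => K * ((Real.sqrt (2*π*t))⁻¹ * Real.exp (-(u*((1/α)+t)-z)^2/(2*D*t))) :=
    funext fun z => hPeq t z
  have h3 : (fun y => deriv (fun z => P t z u) y) =
      fun y => K * deriv (fun z =>
        (Real.sqrt (2*π*t))⁻¹ * Real.exp (-(u*((1/α)+t)-z)^2/(2*D*t))) y := by
    funext y
    rw [h2]
    exact deriv_const_mul_field K
  rw [h1, h3, h2]
  have eA : deriv (fun s => K * ((Real.sqrt (2*π*s))⁻¹ *
        Real.exp (-(u*((1/α)+s)-x)^2/(2*D*s)))) t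
      = K * deriv (fun s =>
        (Real.sqrt (2*π*s))⁻¹ * Real.exp (-(u*((1/α)+s)-x)^2/(2*D*s))) t :=
    deriv_const_mul_field K
  have eB : deriv (fun z => K * ((Real.sqrt (2*π*t))⁻¹ *
        Real.exp (-(u*((1/α)+t)-z)^2/(2*D*t)))) x
      = K * deriv (fun z =>
        (Real.sqrt (2*π*t))⁻¹ * Real.exp (-(u*((1/α)+t)-z)^2/(2*D*t))) x :=
    deriv_const_mul_field K
  have eC : deriv (fun y => K * deriv (fun z =>
        (Real.sqrt (2*π*t))⁻¹ * Real.exp (-(u*((1/α)+t)-z)^2/(2*D*t))) y) x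
      = K * deriv (fun y => deriv (fun z =>
        (Real.sqrt (2*π*t))⁻¹ * Real.exp (-(u*((1/α)+t)-z)^2/(2*D*t))) y) x :=
    deriv_const_mul_field K
  rw [eA, eB, eC, gauss_pde u (1/α) D hDpos t x ht]
  ring
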